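/- Let p > 1 and let h, a ≥ 0 be real numbers, and let M, N ≥ 1. Suppose F : Matrix (Fin M) (Fin N) ℝ → ℝ is a nonnegative function satisfying, for all ξ, η, the Lipschitz condition |F(ξ) − F(η)| ≤ (h + F(ξ) + F(η) + ‖ξ‖^p + ‖η‖^p)^{(p−1)/p} · a^{1/p} · ‖ξ − η‖. Then for all ξ, η one has F(ξ) ≤ (p−1)·h + (2p−1)·F(η) + (p−1)·(‖ξ‖^p + ‖η‖^p) + a·‖ξ − η‖^p. -/

import Mathlib

open Matrix

/-- The Frobenius norm of a real matrix: `‖ξ‖ = (tr(ξᵀξ))^(1/2)`. -/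
noncomputable def frobNorm {M N : ℕ} (ξ : Matrix (Fin M) (Fin N) ℝ) : ℝ :=
  Real.sqrt ((ξᵀ * ξ).trace)

/-- Inequality (2.7): the growth bound derived from the Lipschitz condition (2.5)
via Young's inequality. -/
theorem growth_bound_from_lipschitz {M N : ℕ} (hM : 1 ≤ M) (hN : 1 ≤ N)
    (p h a : ℝ) (hp : 1 < p) (hh : 0 ≤ h) (ha : 0 ≤ a)
    (F : Matrix (Fin M) (Fin N) ℝ → ℝ)
    (hFnonneg : ∀ ξ, 0 ≤ F ξ)
    (hLip : ∀ ξ η : Matrix (Fin M) (Fin N) ℝ,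
      |F ξ - F η| ≤
        (h + F ξ + F η + frobNorm ξ ^ p + frobNorm η ^ p) ^ ((p - 1) / p) *
          a ^ (1 / p) * frobNorm (ξ - η)) :
    ∀ ξ η : Matrix (Fin M) (Fin N) ℝ,
      F ξ ≤ (p - 1) * h + (2 * p - 1) * F η +
        (p - 1) * (frobNorm ξ ^ p + frobNorm η ^ p) + a * frobNorm (ξ - η) ^ p := by
  intro ξ η
  have hp0 : 0 < p := lt_trans one_pos hp
  have hp1 : p - 1 ≠ 0 := sub_ne_zero.2 (ne_of_gt hp)
  set t : ℝ := frobNorm (ξ - η) with ht'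
  have htn : 0 ≤ t := Real.sqrt_nonneg _
  have hA : 0 ≤ frobNorm ξ ^ p := Real.rpow_nonneg (Real.sqrt_nonneg _) p
  have hB : 0 ≤ frobNorm η ^ p := Real.rpow_nonneg (Real.sqrt_nonneg _) p
  set S : ℝ := h + F ξ + F η + frobNorm ξ ^ p + frobNorm η ^ p with hS'
  have hS : 0 ≤ S := by have := hFnonneg ξ; have := hFnonneg η; rw [hS']; linarith
  have hq : (p / (p - 1)).HolderConjugate p :=
    (Real.HolderConjugate.conjExponent hp).symm
  have hx : 0 ≤ S ^ ((p - 1) / p) := Real.rpow_nonneg hS _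
  have hy : 0 ≤ a ^ (1 / p) * t := mul_nonneg (Real.rpow_nonneg ha _) htn
  have young := Real.young_inequality_of_nonneg hx hy hq
  have hx2 : (S ^ ((p - 1) / p)) ^ (p / (p - 1)) = S := by
    rw [← Real.rpow_mul hS]
    have : (p - 1) / p * (p / (p - 1)) = 1 := by field_simp
    rw [this, Real.rpow_one]
  have hy2 : (a ^ (1 / p) * t) ^ p = a * t ^ p := by
    rw [Real.mul_rpow (Real.rpow_nonneg ha _) htn, ← Real.rpow_mul ha]
    have : 1 / p * p = 1 := by field_simp
    rw [this, Real.rpow_one]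
  rw [hx2, hy2] at young
  have hlip := hLip ξ η
  have key : F ξ - F η ≤ S / (p / (p - 1)) + a * t ^ p / p := by
    calc F ξ - F η ≤ |F ξ - F η| := le_abs_self _
      _ ≤ S ^ ((p - 1) / p) * (a ^ (1 / p) * t) := by
          rw [← mul_assoc]; exact hlip
      _ ≤ _ := young
  have hdiv : S / (p / (p - 1)) = S * (p - 1) / p := by
    field_simp
    try ring
  rw [hdiv] at key
  have key2 : p * (F ξ - F η) ≤ S * (p - 1) + a * t ^ p := by
    have := mul_le_mul_of_nonneg_left key hp0.le
    calc p * (F ξ - F η) ≤ p * (S * (p - 1) / p + a * t ^ p / p) := this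
      _ = S * (p - 1) + a * t ^ p := by field_simp
  have hSe : S = h + F ξ + F η + frobNorm ξ ^ p + frobNorm η ^ p := hS'
  nlinarith [key2, hFnonneg ξ, hFnonneg η]
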